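/- Let G be a graph, k an even positive integer, c = 3k/2, and r = c·|E(G)| − (k/2)·C(k,2). Then G contains a clique of size k if and only if there exists X ⊆ V(G) with cost(X) ≤ r, where cost(X) = c·(|E(G)| − |E(X)|) + |X|·|E(X)|. -/

import Mathlib

open scoped Classical

variable {V : Type*} [Fintype V]

/-- The edges of `G` with both endpoints in `X`. -/
noncomputable def edgesIn (G : SimpleGraph V) (X : Finset V) : Finset (Sym2 V) :=
  G.edgeFinset.filter (fun e => ∀ v ∈ e, v ∈ X)

/-- The cost of a subset `X` in the Cost-Effective Subgraph problem:
each edge outside `X` costs `c`, each edge inside `X` costs `|X|`. -/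
noncomputable def costCES (G : SimpleGraph V) (c : ℕ) (X : Finset V) : ℕ :=
  c * (G.edgeFinset.card - (edgesIn G X).card) + X.card * (edgesIn G X).card

lemma edgesIn_subset (G : SimpleGraph V) (X : Finset V) :
    edgesIn G X ⊆ X.offDiag.image Sym2.mk.uncurry := by
  intro e he
  rw [edgesIn, Finset.mem_filter] at he
  obtain ⟨he1, he2⟩ := he
  induction e with
  | _ a b =>
    rw [SimpleGraph.mem_edgeFinset, SimpleGraph.mem_edgeSet] at he1
    refine Finset.mem_image.2 ⟨(a, b), Finset.mem_offDiag.2 ⟨?_, ?_, he1.ne⟩, rfl⟩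
    · exact he2 a (Sym2.mem_mk_left a b)
    · exact he2 b (Sym2.mem_mk_right a b)

lemma card_edgesIn_le (G : SimpleGraph V) (X : Finset V) :
    (edgesIn G X).card ≤ X.card.choose 2 := by
  rw [← Sym2.card_image_offDiag]
  exact Finset.card_le_card (edgesIn_subset G X)

lemma edgesIn_eq_of_clique {G : SimpleGraph V} {X : Finset V} (h : G.IsClique X) :
    edgesIn G X = X.offDiag.image Sym2.mk.uncurry := by
  refine Finset.Subset.antisymm (edgesIn_subset G X) ?_
  intro e he
  obtain ⟨⟨a, b⟩, hab, rfl⟩ := Finset.mem_image.1 he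
  rw [Finset.mem_offDiag] at hab
  rw [edgesIn, Finset.mem_filter]
  constructor
  · rw [SimpleGraph.mem_edgeFinset, Function.uncurry_apply_pair, SimpleGraph.mem_edgeSet]
    exact h hab.1 hab.2.1 hab.2.2
  · intro v hv
    rcases Sym2.mem_iff.1 hv with rfl | rfl
    · exact hab.1
    · exact hab.2.1

lemma card_edgesIn_of_clique {G : SimpleGraph V} {X : Finset V} (h : G.IsClique X) :
    (edgesIn G X).card = X.card.choose 2 := by
  rw [edgesIn_eq_of_clique h, Sym2.card_image_offDiag]

lemma clique_of_card_edgesIn {G : SimpleGraph V} {X : Finset V}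
    (h : (edgesIn G X).card = X.card.choose 2) : G.IsClique X := by
  have heq : edgesIn G X = X.offDiag.image Sym2.mk.uncurry :=
    Finset.eq_of_subset_of_card_le (edgesIn_subset G X)
      (by rw [Sym2.card_image_offDiag, h])
  intro a ha b hb hab
  have : s(a, b) ∈ edgesIn G X := by
    rw [heq]
    exact Finset.mem_image.2 ⟨(a, b), Finset.mem_offDiag.2 ⟨ha, hb, hab⟩, rfl⟩
  rw [edgesIn, Finset.mem_filter, SimpleGraph.mem_edgeFinset, SimpleGraph.mem_edgeSet] at this
  exact this.1

lemma key_arith (S J E : ℤ) (hJ : 1 ≤ J) (hS0 : 0 ≤ S) (hE0 : 0 ≤ E)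
    (hE : 2*E ≤ S*(S-1)) (hmain : (3*J - S) * (2*E) ≥ 2*J^2*(2*J-1)) :
    S = 2*J ∧ 2*E = S*(S-1) := by
  have hSlt : S < 3*J := by
    by_contra h
    push_neg at h
    nlinarith
  have hprod : (3*J - S) * (S*(S-1)) ≥ 2*J^2*(2*J-1) := by nlinarith
  have hSeq : S = 2*J := by
    rcases lt_trichotomy S (2*J) with h | h | h
    · exfalso
      have ht : 1 ≤ 2*J - S := by linarith
      have key : (2*J - S)*(J*(3*(2*J-S)+1) - (2*J-S)*((2*J-S)+1)) > 0 := by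
        have h2 : (2*J - S) ≤ 2*J := by linarith
        refine mul_pos (by linarith) ?_
        nlinarith
      nlinarith [key]
    · exact h
    · exfalso
      have hu : 1 ≤ S - 2*J := by linarith
      have key : (S-2*J)*((S-2*J)*((S-2*J)-1) + J*(3*(S-2*J)-1)) > 0 := by
        refine mul_pos (by linarith) ?_
        nlinarith
      nlinarith [key]
  subst hSeq
  refine ⟨rfl, by nlinarith⟩

/-- The reduction from CLIQUE: with `k = 2j` even, `c = 3j = 3k/2` and
`r = c·|E(G)| − (k/2)·C(k,2)`, the graph `G` has a clique of size `k` iff some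
`X ⊆ V(G)` has `cost(X) ≤ r`. -/
theorem stmt7 (G : SimpleGraph V) (k j c : ℕ) (hk : 0 < k) (hj : k = 2 * j)
    (hc : c = 3 * j) :
    (∃ X : Finset V, G.IsNClique k X) ↔
      ∃ X : Finset V,
        (costCES G c X : ℤ) ≤ (c : ℤ) * G.edgeFinset.card - j * k.choose 2 := by
  have hj1 : 1 ≤ j := by omega
  have hK : k.choose 2 = j * (2*j - 1) := by
    subst hj
    rw [Nat.choose_two_right]
    rcases j with _ | n
    · rfl
    · ring_nf
      omega
  constructor
  · rintro ⟨X, hX⟩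
    refine ⟨X, ?_⟩
    have he : (edgesIn G X).card = k.choose 2 := by
      rw [card_edgesIn_of_clique hX.1, hX.2]
    have hle : (edgesIn G X).card ≤ G.edgeFinset.card :=
      Finset.card_le_card (Finset.filter_subset _ _)
    rw [costCES]
    push_cast [Nat.cast_sub hle]
    rw [he, hX.2]
    have : ((k.choose 2 : ℕ) : ℤ) = (j : ℤ) * (2*(j:ℤ) - 1) := by
      rw [hK]; push_cast [Nat.cast_sub (show 1 ≤ 2*j by omega)]; ring
    rw [this]
    subst hc hj
    push_cast
    ring_nf
    nlinarith [G.edgeFinset.card]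
  · rintro ⟨X, hX⟩
    set s := X.card with hs
    set e := (edgesIn G X).card with heDef
    have hle : e ≤ G.edgeFinset.card :=
      Finset.card_le_card (Finset.filter_subset _ _)
    have hEb : e ≤ s.choose 2 := card_edgesIn_le G X
    rw [costCES, ← hs, ← heDef] at hX
    push_cast [Nat.cast_sub hle] at hX
    have hKZ : ((k.choose 2 : ℕ) : ℤ) = (j : ℤ) * (2*(j:ℤ) - 1) := by
      rw [hK]; push_cast [Nat.cast_sub (show 1 ≤ 2*j by omega)]; ring
    rw [hKZ] at hX
    have hdvd : 2 ∣ s * (s - 1) := by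
      rcases Nat.even_or_odd s with h | h
      · exact Dvd.dvd.mul_right h.two_dvd _
      · rcases Nat.eq_zero_or_pos s with h0 | h0
        · simp [h0]
        · refine Dvd.dvd.mul_left ?_ _
          obtain ⟨t, ht⟩ := h
          exact ⟨t, by omega⟩
    have h2c : 2 * s.choose 2 = s * (s - 1) := by
      rw [Nat.choose_two_right, Nat.mul_div_cancel' hdvd]
    have hTZ : (s : ℤ) * ((s : ℤ) - 1) = 2 * (s.choose 2 : ℤ) := by
      rcases Nat.eq_zero_or_pos s with h0 | h0
      · simp [h0]
      · have hcast : ((s - 1 : ℕ) : ℤ) = (s : ℤ) - 1 := by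
          push_cast [Nat.cast_sub h0]; ring
        have : ((2 * s.choose 2 : ℕ) : ℤ) = ((s * (s - 1) : ℕ) : ℤ) :=
          Nat.cast_inj.mpr h2c
        push_cast [hcast] at this
        linarith
    have hEb' : 2 * (e : ℤ) ≤ (s : ℤ) * ((s : ℤ) - 1) := by
      rw [hTZ]
      have : (e : ℤ) ≤ (s.choose 2 : ℤ) := by exact_mod_cast hEb
      linarith
    have hmain : (3*(j:ℤ) - s) * (2*(e:ℤ)) ≥ 2*(j:ℤ)^2*(2*(j:ℤ)-1) := by
      subst hc
      push_cast at hX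
      nlinarith [hX]
    obtain ⟨h1, h2⟩ := key_arith (s : ℤ) (j : ℤ) (e : ℤ) (by exact_mod_cast hj1)
      (by positivity) (by positivity) hEb' hmain
    have hscard : s = k := by
      have : (s : ℤ) = (k : ℤ) := by rw [h1, hj]; push_cast; ring
      exact_mod_cast this
    have hechoose : e = s.choose 2 := by
      have : (e : ℤ) = (s.choose 2 : ℤ) := by rw [hTZ] at h2; linarith
      exact_mod_cast this
    exact ⟨X, clique_of_card_edgesIn hechoose, hscard⟩
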